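/- In a join-free transactional history of CBCAST, along any effective route R₀ → R₁ → ⋯ → R_k = T of a message n from its originator R₀ to a process T, every intermediate process Rᵢ is a member of the message's view mview(n), and the removal views are strictly increasing: r(R₀) < r(R₁) < ⋯ < r(R_{k−1}). -/

import Mathlib

/-- **Effective routes and removal views** (join-free transactional CBCAST history):
along any effective route `R₀ → R₁ → ⋯ → R_k = T` of a message `n` from its originator
`R₀ = orig n` to a process `T`, every process on the route is a member of the message
view `mview n` (its removal view exceeds `mview n`), and the removal views are strictly
increasing along the route excluding the final process:
`rv R₀ < rv R₁ < ⋯ < rv R_{k-1}`.  The hypotheses transcribe the protocol rules: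
messages are broadcast and forwarded only among members of the message view, and
forwarding is triggered exactly by the removal notification of the previous effective
sender. -/
theorem effective_route_death_views
    {Proc Msg : Type*}
    (rv : Proc → ℕ∞) (mview : Msg → ℕ) (orig : Msg → Proc)
    (effSend : Msg → Proc → Proc → Prop)
    (hmem : ∀ (n : Msg) (P Q : Proc), effSend n P Q →
        (mview n : ℕ∞) < rv P ∧ (mview n : ℕ∞) < rv Q)
    (hfwd : ∀ (n : Msg) (P Q R : Proc), effSend n P Q → effSend n Q R → rv P < rv Q)
    (n : Msg) (l : List Proc) (T : Proc)
    (hlen : 2 ≤ l.length)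
    (hhead : l.head? = some (orig n))
    (hlast : l.getLast? = some T)
    (hchain : l.Chain' (effSend n)) :
    (∀ R ∈ l, (mview n : ℕ∞) < rv R) ∧
      ∀ (i j : ℕ) (hi : i < l.length) (hj : j < l.length),
        i < j → j < l.length - 1 → rv (l.get ⟨i, hi⟩) < rv (l.get ⟨j, hj⟩) := by

  have hstep : ∀ i (h : i < l.length - 1),
      effSend n (l.get ⟨i, by omega⟩) (l.get ⟨i+1, by omega⟩) :=
    fun i h => List.isChain_iff_getElem.mp hchain i (by omega)
  constructor
  · intro R hR
    obtain ⟨⟨i, hi⟩, rfl⟩ := List.mem_iff_get.mp hR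
    rcases lt_or_ge i (l.length - 1) with h | h
    · exact (hmem n _ _ (hstep i h)).1
    · have h1 : i - 1 < l.length - 1 := by omega
      have h2 := (hmem n _ _ (hstep (i - 1) h1)).2
      have he : i - 1 + 1 = i := by omega
      simpa [he] using h2
  · intro i j hi hj hij hjlt
    induction j with
    | zero => omega
    | succ k ih =>
      have hk : k < l.length := by omega
      have hadj : rv (l.get ⟨k, hk⟩) < rv (l.get ⟨k + 1, hj⟩) :=
        hfwd n _ _ _ (hstep k (by omega)) (hstep (k + 1) (by omega))
      rcases Nat.lt_or_ge i k with h | h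
      · exact lt_trans (ih hk h (by omega)) hadj
      · have : i = k := by omega
        subst this
        exact hadj
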